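/- Let G be a finite simple graph and let S be a nonempty vertex set maximizing the average degree (1/|S|) Σ_{u∈S} deg_S(u). Then for every real p ≤ 1 (p ≠ 0) and every nonempty vertex set T, the p-mean of degrees over S satisfies ((1/|S|) Σ_{u∈S} deg_S(u)^p)^{1/p} ≥ (1/2) · ((1/|T|) Σ_{u∈T} deg_T(u)^p)^{1/p}, provided all degrees involved are positive. In other words, the 1-mean densest subgraph is a 1/2-approximation for the p-mean densest subgraph for all p ≤ 1. -/

import Mathlib

open Finset

variable {V : Type*} [Fintype V] [DecidableEq V]

/-- Degree of `u` in the subgraph of `G` induced by `S`. -/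
def degS (G : SimpleGraph V) [DecidableRel G.Adj] (S : Finset V) (u : V) : ℕ :=
  (S.filter (fun v => G.Adj u v)).card

lemma convexOn_rpow_neg {p : ℝ} (hp : p ≤ 0) :
    ConvexOn ℝ (Set.Ioi (0:ℝ)) (fun x : ℝ => x ^ p) := by
  have hderiv : ∀ x ∈ Set.Ioi (0:ℝ), deriv (fun x : ℝ => x ^ p) x = p * x ^ (p - 1) :=
    fun x hx => Real.deriv_rpow_const x p
  apply convexOn_of_deriv2_nonneg' (convex_Ioi 0)
  · intro x hx
    exact (Real.hasDerivAt_rpow_const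
      (Or.inl (ne_of_gt (Set.mem_Ioi.mp hx)))).differentiableAt.differentiableWithinAt
  · refine DifferentiableOn.congr (f := fun x : ℝ => p * x ^ (p - 1)) ?_ hderiv
    intro x hx
    exact (((Real.hasDerivAt_rpow_const
      (Or.inl (ne_of_gt (Set.mem_Ioi.mp hx)))).differentiableAt).const_mul p).differentiableWithinAt
  · intro x hx
    have hx' : (0:ℝ) < x := hx
    have hev : (deriv fun x : ℝ => x ^ p) =ᶠ[nhds x] fun x : ℝ => p * x ^ (p - 1) := by
      filter_upwards [Ioi_mem_nhds hx'] with y hy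
      exact Real.deriv_rpow_const y p
    have h2 : deriv^[2] (fun x : ℝ => x ^ p) x
        = deriv (deriv fun x : ℝ => x ^ p) x := rfl
    rw [h2, hev.deriv_eq, deriv_const_mul _ ((Real.hasDerivAt_rpow_const
      (Or.inl hx'.ne')).differentiableAt), Real.deriv_rpow_const x]
    have h3 : (0:ℝ) ≤ p * (p - 1) :=
      mul_nonneg_of_nonpos_of_nonpos hp (by linarith)
    nlinarith [Real.rpow_nonneg hx'.le (p - 1 - 1)]

lemma degS_erase (G : SimpleGraph V) [DecidableRel G.Adj] (S : Finset V) {u : V}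
    (hu : u ∈ S) (v : V) :
    (degS G (S.erase u) v : ℝ) = (degS G S v : ℝ) - (if G.Adj v u then 1 else 0) := by
  have hfe : (S.erase u).filter (fun w => G.Adj v w)
      = (S.filter (fun w => G.Adj v w)).erase u := by
    ext w; simp [Finset.mem_erase, Finset.mem_filter]; tauto
  by_cases h : G.Adj v u
  · have hu' : u ∈ S.filter (fun w => G.Adj v w) := Finset.mem_filter.2 ⟨hu, h⟩
    have hpos : 1 ≤ (S.filter (fun w => G.Adj v w)).card := Finset.card_pos.2 ⟨u, hu'⟩
    rw [degS, hfe, Finset.card_erase_of_mem hu']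
    rw [Nat.cast_sub hpos]
    simp [degS, h]
  · rw [degS, hfe, Finset.erase_eq_of_notMem (by simp [Finset.mem_filter, h])]
    simp [degS, h]

lemma sum_degS_erase (G : SimpleGraph V) [DecidableRel G.Adj] (S : Finset V) {u : V}
    (hu : u ∈ S) :
    ∑ v ∈ S.erase u, (degS G (S.erase u) v : ℝ)
      = ∑ v ∈ S, (degS G S v : ℝ) - 2 * (degS G S u : ℝ) := by
  have h1 : ∑ v ∈ S.erase u, (degS G (S.erase u) v : ℝ)
      = ∑ v ∈ S.erase u, ((degS G S v : ℝ) - (if G.Adj v u then 1 else 0)) :=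
    Finset.sum_congr rfl fun v _ => degS_erase G S hu v
  rw [h1, Finset.sum_sub_distrib, Finset.sum_erase_eq_sub hu]
  have h2 : ∑ v ∈ S.erase u, (if G.Adj v u then (1:ℝ) else 0)
      = ∑ v ∈ S, (if G.Adj v u then (1:ℝ) else 0) := by
    rw [Finset.sum_erase_eq_sub hu]
    simp [G.irrefl]
  have h3 : ∑ v ∈ S, (if G.Adj v u then (1:ℝ) else 0) = (degS G S u : ℝ) := by
    rw [Finset.sum_boole, degS]
    congr 2
    apply Finset.filter_congr
    intro v _
    exact ⟨fun h => h.symm, fun h => h.symm⟩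
  rw [h2, h3]
  ring

/-- A subgraph maximizing the average degree is a `1/2`-approximation for the
`p`-mean densest subgraph, for every `p ≤ 1`, `p ≠ 0`. -/
theorem one_mean_half_approx_p_mean (G : SimpleGraph V) [DecidableRel G.Adj]
    (S : Finset V) (hS : S.Nonempty)
    (hopt : ∀ T : Finset V, T.Nonempty →
      (1 / (T.card : ℝ)) * ∑ u ∈ T, (degS G T u : ℝ) ≤
        (1 / (S.card : ℝ)) * ∑ u ∈ S, (degS G S u : ℝ))
    (p : ℝ) (hp : p ≤ 1) (hp0 : p ≠ 0)
    (T : Finset V) (hT : T.Nonempty)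
    (hdS : ∀ u ∈ S, 0 < degS G S u) (hdT : ∀ u ∈ T, 0 < degS G T u) :
    (1 / 2) * ((1 / (T.card : ℝ)) * ∑ u ∈ T, (degS G T u : ℝ) ^ p) ^ (1 / p) ≤
      ((1 / (S.card : ℝ)) * ∑ u ∈ S, (degS G S u : ℝ) ^ p) ^ (1 / p) := by
  -- notation
  set n : ℝ := (S.card : ℝ) with hn
  set m : ℝ := (T.card : ℝ) with hm
  have hn0 : 0 < n := by rw [hn]; exact_mod_cast Finset.card_pos.2 hS
  have hm0 : 0 < m := by rw [hm]; exact_mod_cast Finset.card_pos.2 hT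
  set Ssum : ℝ := ∑ u ∈ S, (degS G S u : ℝ) with hSsum
  -- minimal degree vertex of S
  obtain ⟨u, huS, humin⟩ := S.exists_min_image (fun v => degS G S v) hS
  set d : ℝ := (degS G S u : ℝ) with hd
  have hd0 : 0 < d := by rw [hd]; exact_mod_cast hdS u huS
  -- S.erase u is nonempty
  have hdu : 0 < degS G S u := hdS u huS
  obtain ⟨w, hw⟩ := Finset.card_pos.1 hdu
  have hwS : w ∈ S := (Finset.mem_filter.1 hw).1
  have hwu : w ≠ u := by
    rintro rfl; exact G.irrefl (Finset.mem_filter.1 hw).2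
  have herase : (S.erase u).Nonempty := ⟨w, Finset.mem_erase.2 ⟨hwu, hwS⟩⟩
  -- density of S.erase u is at most density of S
  have hcard_erase : ((S.erase u).card : ℝ) = n - 1 := by
    rw [Finset.card_erase_of_mem huS, hn]
    have : 1 ≤ S.card := Finset.card_pos.2 hS
    push_cast [Nat.cast_sub this]
    ring
  have hkey : Ssum ≤ 2 * n * d := by
    have h := hopt (S.erase u) herase
    rw [sum_degS_erase G S huS, hcard_erase] at h
    have hn1 : (0:ℝ) < n - 1 := by
      have hc2 : 2 ≤ S.card := by
        have := Finset.one_lt_card.2 ⟨w, hwS, u, huS, hwu⟩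
        omega
      have hc2' : (2:ℝ) ≤ n := by rw [hn]; exact_mod_cast hc2
      linarith
    rw [div_mul_eq_mul_div, div_mul_eq_mul_div, div_le_div_iff₀ hn1 hn0] at h
    nlinarith
  -- average degree of S is at most 2 d
  have havg : (1 / n) * Ssum ≤ 2 * d := by
    rw [div_mul_eq_mul_div, div_le_iff₀ hn0]
    nlinarith
  -- d ≤ p-mean of S
  set A : ℝ := (1 / n) * ∑ v ∈ S, (degS G S v : ℝ) ^ p with hA
  have hdle : ∀ v ∈ S, d ≤ (degS G S v : ℝ) := by
    intro v hv; rw [hd]; exact_mod_cast humin v hv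
  have hstep2 : d ≤ A ^ (1 / p) := by
    rcases lt_or_gt_of_ne hp0 with hneg | hpos
    · -- p < 0 : deg^p ≤ d^p, so A ≤ d^p, and x ↦ x^(1/p) antitone
      have hle : A ≤ d ^ p := by
        have : ∑ v ∈ S, (degS G S v : ℝ) ^ p ≤ ∑ v ∈ S, d ^ p :=
          Finset.sum_le_sum fun v hv =>
            Real.rpow_le_rpow_of_nonpos hd0 (hdle v hv) hneg.le
        rw [hA]
        calc (1 / n) * ∑ v ∈ S, (degS G S v : ℝ) ^ p
            ≤ (1 / n) * ∑ v ∈ S, d ^ p := by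
              apply mul_le_mul_of_nonneg_left this (by positivity)
          _ = d ^ p := by
              rw [Finset.sum_const, nsmul_eq_mul]
              field_simp
              exact hn.symm
      have hApos : 0 < A := by
        rw [hA]
        apply mul_pos (by positivity)
        apply Finset.sum_pos _ hS
        intro v hv
        have : (0:ℝ) < (degS G S v : ℝ) := by exact_mod_cast hdS v hv
        positivity
      have h1p : (1:ℝ) / p ≤ 0 := by
        rw [one_div]; exact inv_nonpos.2 hneg.le
      have := Real.rpow_le_rpow_of_nonpos hApos hle h1p
      rwa [← Real.rpow_mul hd0.le, mul_one_div_cancel hp0, Real.rpow_one] at this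
    · -- 0 < p : d^p ≤ deg^p, so d^p ≤ A
      have hle : d ^ p ≤ A := by
        have : ∑ v ∈ S, d ^ p ≤ ∑ v ∈ S, (degS G S v : ℝ) ^ p :=
          Finset.sum_le_sum fun v hv =>
            Real.rpow_le_rpow hd0.le (hdle v hv) hpos.le
        rw [hA]
        calc d ^ p = (1 / n) * ∑ v ∈ S, d ^ p := by
              rw [Finset.sum_const, nsmul_eq_mul]; field_simp; exact hn
          _ ≤ (1 / n) * ∑ v ∈ S, (degS G S v : ℝ) ^ p := by
              apply mul_le_mul_of_nonneg_left this (by positivity)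
      have := Real.rpow_le_rpow (by positivity) hle (by positivity : (0:ℝ) ≤ 1 / p)
      rwa [← Real.rpow_mul hd0.le, mul_one_div_cancel hp0, Real.rpow_one] at this
  -- p-mean of T is at most the average degree of T
  set B : ℝ := (1 / m) * ∑ v ∈ T, (degS G T v : ℝ) ^ p with hB
  set aT : ℝ := (1 / m) * ∑ v ∈ T, (degS G T v : ℝ) with haT
  have hwsum : ∑ _v ∈ T, (1 / m) = 1 := by
    rw [Finset.sum_const, nsmul_eq_mul]; field_simp; exact hm.symm
  have hBsum : B = ∑ v ∈ T, (1 / m) * (degS G T v : ℝ) ^ p := by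
    rw [hB, Finset.mul_sum]
  have haTsum : aT = ∑ v ∈ T, (1 / m) * (degS G T v : ℝ) := by
    rw [haT, Finset.mul_sum]
  have hdT' : ∀ v ∈ T, (0:ℝ) < (degS G T v : ℝ) := fun v hv => by
    exact_mod_cast hdT v hv
  have hstep3 : B ^ (1 / p) ≤ aT := by
    rcases lt_or_gt_of_ne hp0 with hneg | hpos
    · -- p < 0 : Jensen with convex x^p
      have hjen := (convexOn_rpow_neg hneg.le).map_sum_le
        (t := T) (w := fun _ => 1 / m) (p := fun v => (degS G T v : ℝ))
        (fun _ _ => by positivity) hwsum (fun v hv => Set.mem_Ioi.2 (hdT' v hv))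
      simp only [smul_eq_mul] at hjen
      -- hjen : aT ^ p ≤ B
      have haTpos : 0 < aT := by
        rw [haT]
        apply mul_pos (by positivity)
        exact Finset.sum_pos (fun v hv => hdT' v hv) hT
      have haTp : (0:ℝ) < aT ^ p := Real.rpow_pos_of_pos haTpos p
      have h2 : B ^ (1 / p) ≤ (aT ^ p) ^ (1 / p) := by
        apply Real.rpow_le_rpow_of_nonpos haTp
        · rw [hBsum, haTsum]; exact hjen
        · rw [one_div]; exact inv_nonpos.2 hneg.le
      rwa [← Real.rpow_mul haTpos.le, mul_one_div_cancel hp0, Real.rpow_one] at h2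
    · -- 0 < p ≤ 1 : power mean inequality via arith_mean_le_rpow_mean
      have hq : (1:ℝ) ≤ 1 / p := by
        rw [le_div_iff₀ hpos]; linarith
      have ham := Real.arith_mean_le_rpow_mean T (fun _ => 1 / m)
        (fun v => (degS G T v : ℝ) ^ p) (fun _ _ => by positivity) hwsum
        (fun v hv => Real.rpow_nonneg (hdT' v hv).le _) hq
      -- ham : ∑ w * deg^p ≤ (∑ w * (deg^p)^(1/p)) ^ (1/(1/p))
      have hsimp : ∀ v ∈ T, (1 / m) * ((degS G T v : ℝ) ^ p) ^ ((1:ℝ) / p)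
          = (1 / m) * (degS G T v : ℝ) := by
        intro v hv
        rw [← Real.rpow_mul (hdT' v hv).le, mul_one_div_cancel hp0, Real.rpow_one]
      rw [Finset.sum_congr rfl hsimp] at ham
      have hBle : B ≤ aT ^ p := by
        rw [hBsum, haTsum]
        have : (1:ℝ) / (1 / p) = p := by field_simp
        calc ∑ v ∈ T, (1 / m) * (degS G T v : ℝ) ^ p
            ≤ (∑ v ∈ T, (1 / m) * (degS G T v : ℝ)) ^ ((1:ℝ) / (1 / p)) := ham
          _ = (∑ v ∈ T, (1 / m) * (degS G T v : ℝ)) ^ p := by rw [this]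
      have haTpos : 0 < aT := by
        rw [haT]
        apply mul_pos (by positivity)
        exact Finset.sum_pos (fun v hv => hdT' v hv) hT
      have hBnn : 0 ≤ B := by
        rw [hB]
        apply mul_nonneg (by positivity)
        exact Finset.sum_nonneg fun v hv => Real.rpow_nonneg (hdT' v hv).le _
      have h2 : B ^ (1 / p) ≤ (aT ^ p) ^ (1 / p) :=
        Real.rpow_le_rpow hBnn hBle (by positivity)
      rwa [← Real.rpow_mul haTpos.le, mul_one_div_cancel hp0, Real.rpow_one] at h2
  -- combine
  have hTS : aT ≤ (1 / n) * Ssum := hopt T hT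
  have hfinal : B ^ (1 / p) ≤ 2 * A ^ (1 / p) := by
    calc B ^ (1 / p) ≤ aT := hstep3
      _ ≤ (1 / n) * Ssum := hTS
      _ ≤ 2 * d := havg
      _ ≤ 2 * A ^ (1 / p) := by linarith
  linarith
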